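/- arXiv:1608.05495 — 2 statements merged into one kernel-verified Lean document; each statement's English description precedes it below -/
import Mathlib

section
/- Let G and H each be a graph of order at least two, with G connected. If either (i) diam(H) ≤ 2 and sdim_f(H) = |V(H)|/2, or (ii) diam(H) > 2 and sdim_f(K_1 ⊙ H) = |V(H)|/2, then sdim_f(G[H]) = |V(G)|·|V(H)|/2. (In case (i), H is additionally connected so that diam(H) is defined.) -/
open SimpleGraph

/-- `Sset G x y` is the set `S{x,y}` of vertices `z` such that `x` lies on some shortest
`y`–`z` path or `y` lies on some shortest `x`–`z` path in `G`. -/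
def Sset {V : Type*} (G : SimpleGraph V) (x y : V) : Set V :=
  {z | (∃ p : G.Walk y z, p.length = G.dist y z ∧ x ∈ p.support) ∨
       (∃ p : G.Walk x z, p.length = G.dist x z ∧ y ∈ p.support)}

/-- A strong resolving function of `G`: `g : V → [0,1]` with `g(S{x,y}) ≥ 1` for all
distinct vertices `x, y`. -/
def IsSRF {V : Type*} (G : SimpleGraph V) (g : V → ℝ) : Prop :=
  (∀ v, 0 ≤ g v ∧ g v ≤ 1) ∧ ∀ x y : V, x ≠ y → 1 ≤ ∑ᶠ z ∈ Sset G x y, g z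

/-- The fractional strong metric dimension of `G`. -/
noncomputable def sdimf {V : Type*} (G : SimpleGraph V) : ℝ :=
  sInf {s : ℝ | ∃ g : V → ℝ, IsSRF G g ∧ s = ∑ᶠ v, g v}

/-- A strong resolving set of `G`: every pair of distinct vertices is strongly resolved
by some vertex of `S` (i.e. some vertex of `S` lies in `S{x,y}`). -/
def IsSRSet {V : Type*} (G : SimpleGraph V) (S : Set V) : Prop :=
  ∀ x y : V, x ≠ y → ∃ z ∈ S, z ∈ Sset G x y

/-- The strong metric dimension of `G`: the minimum cardinality of a strong resolving set. -/
noncomputable def sdim {V : Type*} (G : SimpleGraph V) : ℕ :=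
  sInf {n : ℕ | ∃ S : Set V, IsSRSet G S ∧ S.ncard = n}

/-- `u` is maximally distant from `v`: `d(u,v) ≥ d(w,v)` for every neighbor `w` of `u`. -/
def MaxDistFrom {V : Type*} (G : SimpleGraph V) (u v : V) : Prop :=
  ∀ w : V, G.Adj u w → G.dist w v ≤ G.dist u v

/-- `u` and `v` are mutually maximally distant (MMD) in `G`. -/
def MMD {V : Type*} (G : SimpleGraph V) (u v : V) : Prop :=
  u ≠ v ∧ MaxDistFrom G u v ∧ MaxDistFrom G v u

/-- The strong resolving graph of `G` (on the ambient vertex set): `u ~ v` iff `u` MMD `v`. -/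
def SRGraph {V : Type*} (G : SimpleGraph V) : SimpleGraph V where
  Adj := MMD G
  symm := ⟨fun _ _ h => ⟨h.1.symm, h.2.2, h.2.1⟩⟩
  loopless := ⟨fun _ h => h.1 rfl⟩

/-- `M(G)`: the set of vertices that are mutually maximally distant with some vertex. -/
def Mset {V : Type*} (G : SimpleGraph V) : Set V := {x | ∃ y, MMD G x y}

/-- The matching number of `G`. -/
noncomputable def matchNum {V : Type*} (G : SimpleGraph V) : ℕ :=
  sSup {n : ℕ | ∃ M : G.Subgraph, M.IsMatching ∧ M.edgeSet.ncard = n}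

/-- The corona product `G ⊙ H`. -/
def corona {V W : Type*} (G : SimpleGraph V) (H : SimpleGraph W) :
    SimpleGraph (V ⊕ V × W) where
  Adj x y :=
    match x, y with
    | Sum.inl u, Sum.inl u' => G.Adj u u'
    | Sum.inl u, Sum.inr iw => u = iw.1
    | Sum.inr iw, Sum.inl u => iw.1 = u
    | Sum.inr iw, Sum.inr iw' => iw.1 = iw'.1 ∧ H.Adj iw.2 iw'.2
  symm := by
    constructor
    rintro (u | iw) (u' | iw') h
    · exact G.adj_symm h
    · exact h.symm
    · exact h.symm
    · exact ⟨h.1.symm, H.adj_symm h.2⟩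
  loopless := by
    constructor
    rintro (u | iw) h
    · exact G.irrefl h
    · exact H.irrefl h.2

/-- `K₁ ⊙ H`: the graph obtained from `H` by adding one new vertex adjacent to every
vertex of `H`. -/
def cone {W : Type*} (H : SimpleGraph W) : SimpleGraph (Option W) where
  Adj x y :=
    match x, y with
    | none, none => False
    | none, some _ => True
    | some _, none => True
    | some w, some w' => H.Adj w w'
  symm := by
    constructor
    rintro (_ | w) (_ | w') h
    · exact h
    · exact trivial
    · exact trivial
    · exact H.adj_symm h
  loopless := by
    constructor
    rintro (_ | w) h
    · exact h
    · exact H.irrefl h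

/-- The lexicographic product `G[H]`. -/
def lexProd {V W : Type*} (G : SimpleGraph V) (H : SimpleGraph W) :
    SimpleGraph (V × W) where
  Adj x y := G.Adj x.1 y.1 ∨ (x.1 = y.1 ∧ H.Adj x.2 y.2)
  symm := by
    constructor
    rintro x y (h | ⟨h1, h2⟩)
    · exact Or.inl (G.adj_symm h)
    · exact Or.inr ⟨h1.symm, H.adj_symm h2⟩
  loopless := by
    constructor
    rintro x (h | ⟨_, h2⟩)
    · exact G.irrefl h
    · exact H.irrefl h2

/-- `SL{x,y} = (N[x] ∪ N[y]) ∩ S{x,y}`. -/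
def SLset {W : Type*} (H : SimpleGraph W) (x y : W) : Set W :=
  (insert x (H.neighborSet x) ∪ insert y (H.neighborSet y)) ∩ Sset H x y

/-- A strong locating function of `H`. -/
def IsSLF {W : Type*} (H : SimpleGraph W) (f : W → ℝ) : Prop :=
  (∀ v, 0 ≤ f v ∧ f v ≤ 1) ∧ ∀ x y : W, x ≠ y → 1 ≤ ∑ᶠ z ∈ SLset H x y, f z

/-- `sl_f(H)`: the minimum weight of a strong locating function of `H`. -/
noncomputable def slf {W : Type*} (H : SimpleGraph W) : ℝ :=
  sInf {s : ℝ | ∃ f : W → ℝ, IsSLF H f ∧ s = ∑ᶠ v, f v}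

/-- `u` has a true twin: some other vertex with the same closed neighborhood. -/
def HasTrueTwin {V : Type*} (G : SimpleGraph V) (u : V) : Prop :=
  ∃ v : V, v ≠ u ∧ insert v (G.neighborSet v) = insert u (G.neighborSet u)

/-- `u` has a false twin: some other vertex with the same open neighborhood. -/
def HasFalseTwin {V : Type*} (G : SimpleGraph V) (u : V) : Prop :=
  ∃ v : V, v ≠ u ∧ G.neighborSet v = G.neighborSet u

/-- `m₁(G)`: number of vertices in type-1 (singleton) classes of the twin relation. -/
noncomputable def m1 {V : Type*} (G : SimpleGraph V) : ℕ :=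
  {u : V | ¬ HasTrueTwin G u ∧ ¬ HasFalseTwin G u}.ncard

/-- `m₂(G)`: number of vertices in type-2 (clique) classes of the twin relation. -/
noncomputable def m2 {V : Type*} (G : SimpleGraph V) : ℕ :=
  {u : V | HasTrueTwin G u}.ncard

/-- `m₃(G)`: number of vertices in type-3 (independent set) classes of the twin relation. -/
noncomputable def m3 {V : Type*} (G : SimpleGraph V) : ℕ :=
  {u : V | HasFalseTwin G u}.ncard

/-- The strong resolving graph of `G` (whose vertex set is `M(G)`) is Hamiltonian:
there is a cycle in `SRGraph G` passing through every vertex of `M(G)`. -/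
def SRHamiltonian {V : Type*} (G : SimpleGraph V) : Prop :=
  ∃ (u : V) (p : (SRGraph G).Walk u u), p.IsCycle ∧ ∀ v ∈ Mset G, v ∈ p.support

section AuxProof

open SimpleGraph Walk

variable {V W : Type*}

/-- Walks of length one give adjacency. -/
lemma adj_of_walk_length_one {G : SimpleGraph V} {x y : V} (p : G.Walk x y)
    (h : p.length = 1) : G.Adj x y := by
  cases p with
  | nil => simp at h
  | cons ha q =>
    cases q with
    | nil => exact ha
    | cons _ _ => simp [Walk.length_cons] at h

lemma Sset_comm {G : SimpleGraph V} (x y : V) : Sset G x y = Sset G y x := by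
  ext z; exact or_comm

lemma mem_Sset_left {G : SimpleGraph V} {x y : V} (h : G.Reachable y x) : x ∈ Sset G x y := by
  obtain ⟨p, hp⟩ := h.exists_walk_length_eq_dist
  exact Or.inl ⟨p, hp, p.end_mem_support⟩

lemma mem_Sset_right {G : SimpleGraph V} {x y : V} (h : G.Reachable x y) : y ∈ Sset G x y := by
  obtain ⟨p, hp⟩ := h.exists_walk_length_eq_dist
  exact Or.inr ⟨p, hp, p.end_mem_support⟩

/-- Every vertex of a connected nontrivial graph has a neighbor. -/
lemma exists_adj_of_connected {G : SimpleGraph V} [Fintype V] (hG : G.Connected)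
    (hV : 1 < Fintype.card V) (u : V) : ∃ w, G.Adj u w := by
  have : Nontrivial V := Fintype.one_lt_card_iff_nontrivial.mp hV
  obtain ⟨v, hv⟩ := exists_ne u
  obtain ⟨p⟩ := hG.preconnected u v
  obtain ⟨w, hw, -, -⟩ := p.exists_eq_cons_of_ne (Ne.symm hv)
  exact ⟨w, hw⟩

/-- The constant-second-coordinate graph homomorphism into the lexicographic product. -/
def lexConstHom (G : SimpleGraph V) (H : SimpleGraph W) (c : W) : G →g lexProd G H where
  toFun v := (v, c)
  map_rel' := fun h => Or.inl h

/-- Projection of a walk in the lexicographic product to the first factor. -/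
lemma exists_proj_walk {G : SimpleGraph V} {H : SimpleGraph W} :
    ∀ {x y : V × W} (P : (lexProd G H).Walk x y),
      ∃ q : G.Walk x.1 y.1, q.length ≤ P.length := by
  intro x y P
  induction P with
  | nil => exact ⟨Walk.nil, le_rfl⟩
  | @cons x m y h P ih =>
    obtain ⟨q, hq⟩ := ih
    rcases h with h | ⟨h1, h2⟩
    · exact ⟨Walk.cons h q, Nat.succ_le_succ hq⟩
    · exact ⟨q.copy h1.symm rfl, by rw [Walk.length_copy]; exact Nat.le_succ_of_le hq⟩

/-- A lift of a `G`-walk between distinct vertices to the lexicographic product,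
with prescribed second coordinates at the two ends. -/
lemma exists_lift_walk {G : SimpleGraph V} {H : SimpleGraph W} {u w : V}
    (hne : u ≠ w) (p : G.Walk u w) (a c : W) :
    ∃ P : (lexProd G H).Walk (u, a) (w, c), P.length = p.length := by
  obtain ⟨v, h, q, rfl⟩ := p.exists_eq_cons_of_ne hne
  refine ⟨Walk.cons (Or.inl h : (lexProd G H).Adj (u, a) (v, c))
    (q.map (lexConstHom G H c)), ?_⟩
  simp [Walk.length_cons, Walk.length_map]
  exact congrArg (· + 1) (Walk.length_map _ q)

/-- Distance in the lexicographic product between different copies. -/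
lemma lex_dist_ne {G : SimpleGraph V} {H : SimpleGraph W} (hG : G.Connected)
    {u w : V} (hne : u ≠ w) (a c : W) :
    (lexProd G H).dist (u, a) (w, c) = G.dist u w := by
  obtain ⟨p, hp⟩ := hG.exists_walk_length_eq_dist u w
  obtain ⟨P, hP⟩ := exists_lift_walk (H := H) hne p a c
  apply le_antisymm
  · calc (lexProd G H).dist (u, a) (w, c) ≤ P.length := dist_le P
      _ = G.dist u w := by rw [hP, hp]
  · obtain ⟨Q, hQ⟩ := P.reachable.exists_walk_length_eq_dist
    obtain ⟨q, hq⟩ := exists_proj_walk Q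
    calc G.dist u w ≤ q.length := dist_le q
      _ ≤ Q.length := hq
      _ = _ := hQ

end AuxProof

section AuxProof2
open SimpleGraph Walk
variable {V W : Type*}

/-- Key structural lemma: members of `S{(u,a),(u,b)}` in the lexicographic product. -/
lemma Sset_lex_same_subset {G : SimpleGraph V} {H : SimpleGraph W} [Fintype V]
    (hG : G.Connected) (hV : 1 < Fintype.card V) {u : V} {a b : W} (hab : a ≠ b)
    {z : V × W} (hz : z ∈ Sset (lexProd G H) (u, a) (u, b)) :
    z = (u, a) ∨ z = (u, b) ∨
      ∃ c, z = (u, c) ∧ c ≠ a ∧ c ≠ b ∧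
        ((H.Adj b a ∧ H.Adj a c ∧ ¬H.Adj b c) ∨ (H.Adj a b ∧ H.Adj b c ∧ ¬H.Adj a c)) := by
  classical
  obtain ⟨w, c⟩ := z
  -- a walk between copies cannot pass through another vertex of the starting copy
  have key : ∀ (a' b' : W), a' ≠ b' → w ≠ u →
      ∀ (p : (lexProd G H).Walk (u, b') (w, c)),
        p.length = (lexProd G H).dist (u, b') (w, c) → (u, a') ∉ p.support := by
    intro a' b' hab' hwu p hlen hmem
    have htd := congrArg Walk.length (p.take_spec hmem)
    rw [Walk.length_append] at htd
    have ht1 : 1 ≤ (p.takeUntil (u, a') hmem).length := by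
      by_contra h
      have h0 : (p.takeUntil (u, a') hmem).length = 0 := by omega
      have := Walk.eq_of_length_eq_zero h0
      exact hab' (congrArg Prod.snd this).symm
    have hd1 : (lexProd G H).dist (u, a') (w, c) ≤ (p.dropUntil (u, a') hmem).length :=
      dist_le _
    rw [lex_dist_ne hG (Ne.symm hwu) a' c] at hd1
    rw [hlen, lex_dist_ne hG (Ne.symm hwu) b' c] at htd
    omega
  rcases hz with ⟨p, hlen, hmem⟩ | ⟨p, hlen, hmem⟩
  · -- (u,a) on a shortest walk from (u,b) to (w,c)
    by_cases hwu : u = w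
    · subst hwu
      by_cases hca : c = a
      · subst hca; exact Or.inl rfl
      by_cases hcb : c = b
      · subst hcb; exact Or.inr (Or.inl rfl)
      -- now c ∉ {a,b} : analyze the walk
      have htd := congrArg Walk.length (p.take_spec hmem)
      rw [Walk.length_append] at htd
      have ht1 : 1 ≤ (p.takeUntil (u, a) hmem).length := by
        by_contra h
        have h0 : (p.takeUntil (u, a) hmem).length = 0 := by omega
        have := Walk.eq_of_length_eq_zero h0
        exact hab (congrArg Prod.snd this).symm
      have hd1 : 1 ≤ (p.dropUntil (u, a) hmem).length := by
        by_contra h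
        have h0 : (p.dropUntil (u, a) hmem).length = 0 := by omega
        have := Walk.eq_of_length_eq_zero h0
        exact hca (congrArg Prod.snd this).symm
      -- dist ≤ 2 via a detour through a neighboring copy
      obtain ⟨v, hv⟩ := exists_adj_of_connected hG hV u
      have hle2 : (lexProd G H).dist (u, b) (u, c) ≤ 2 := by
        have := dist_le (Walk.cons (show (lexProd G H).Adj (u, b) (v, b) from Or.inl hv)
            (Walk.cons (show (lexProd G H).Adj (v, b) (u, c) from Or.inl hv.symm) Walk.nil))
        simpa using this
      have hp2 : p.length = 2 := by omega
      have htl : (p.takeUntil (u, a) hmem).length = 1 := by omega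
      have hdl : (p.dropUntil (u, a) hmem).length = 1 := by omega
      have hba : H.Adj b a := by
        rcases adj_of_walk_length_one _ htl with h | ⟨-, h⟩
        · exact absurd h (G.loopless.irrefl u)
        · exact h
      have hac : H.Adj a c := by
        rcases adj_of_walk_length_one _ hdl with h | ⟨-, h⟩
        · exact absurd h (G.loopless.irrefl u)
        · exact h
      have hbc : ¬H.Adj b c := by
        intro h
        have : (lexProd G H).dist (u, b) (u, c) = 1 :=
          dist_eq_one_iff_adj.mpr (Or.inr ⟨rfl, h⟩)
        omega
      exact Or.inr (Or.inr ⟨c, rfl, hca, hcb, Or.inl ⟨hba, hac, hbc⟩⟩)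
    · exact absurd hmem (key a b hab (Ne.symm hwu) p hlen)
  · -- (u,b) on a shortest walk from (u,a) to (w,c) : symmetric
    by_cases hwu : u = w
    · subst hwu
      by_cases hca : c = a
      · subst hca; exact Or.inl rfl
      by_cases hcb : c = b
      · subst hcb; exact Or.inr (Or.inl rfl)
      have htd := congrArg Walk.length (p.take_spec hmem)
      rw [Walk.length_append] at htd
      have ht1 : 1 ≤ (p.takeUntil (u, b) hmem).length := by
        by_contra h
        have h0 : (p.takeUntil (u, b) hmem).length = 0 := by omega
        have := Walk.eq_of_length_eq_zero h0
        exact hab (congrArg Prod.snd this)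
      have hd1 : 1 ≤ (p.dropUntil (u, b) hmem).length := by
        by_contra h
        have h0 : (p.dropUntil (u, b) hmem).length = 0 := by omega
        have := Walk.eq_of_length_eq_zero h0
        exact hcb (congrArg Prod.snd this).symm
      obtain ⟨v, hv⟩ := exists_adj_of_connected hG hV u
      have hle2 : (lexProd G H).dist (u, a) (u, c) ≤ 2 := by
        have := dist_le (Walk.cons (show (lexProd G H).Adj (u, a) (v, a) from Or.inl hv)
            (Walk.cons (show (lexProd G H).Adj (v, a) (u, c) from Or.inl hv.symm) Walk.nil))
        simpa using this
      have hp2 : p.length = 2 := by omega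
      have htl : (p.takeUntil (u, b) hmem).length = 1 := by omega
      have hdl : (p.dropUntil (u, b) hmem).length = 1 := by omega
      have hba : H.Adj a b := by
        rcases adj_of_walk_length_one _ htl with h | ⟨-, h⟩
        · exact absurd h (G.loopless.irrefl u)
        · exact h
      have hac : H.Adj b c := by
        rcases adj_of_walk_length_one _ hdl with h | ⟨-, h⟩
        · exact absurd h (G.loopless.irrefl u)
        · exact h
      have hbc : ¬H.Adj a c := by
        intro h
        have : (lexProd G H).dist (u, a) (u, c) = 1 :=
          dist_eq_one_iff_adj.mpr (Or.inr ⟨rfl, h⟩)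
        omega
      exact Or.inr (Or.inr ⟨c, rfl, hca, hcb, Or.inr ⟨hba, hac, hbc⟩⟩)
    · exact absurd hmem (key b a (Ne.symm hab) (Ne.symm hwu) p hlen)

end AuxProof2

section AuxProof3
open SimpleGraph Walk
variable {V W : Type*}

lemma finsum_mem_le_finsum_mem {β : Type*} [Fintype β] {h : β → ℝ} (h0 : ∀ z, 0 ≤ h z)
    {A B : Set β} (hAB : A ⊆ B) : ∑ᶠ z ∈ A, h z ≤ ∑ᶠ z ∈ B, h z := by
  classical
  rw [finsum_mem_eq_finite_toFinset_sum _ (Set.toFinite A),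
    finsum_mem_eq_finite_toFinset_sum _ (Set.toFinite B)]
  apply Finset.sum_le_sum_of_subset_of_nonneg
  · exact Set.Finite.toFinset_subset_toFinset.mpr hAB
  · intro i _ _; exact h0 i

lemma sdimf_bddBelow {V : Type*} [Fintype V] (G : SimpleGraph V) :
    BddBelow {s : ℝ | ∃ g : V → ℝ, IsSRF G g ∧ s = ∑ᶠ v, g v} := by
  refine ⟨0, ?_⟩
  rintro s ⟨g, hg, rfl⟩
  rw [finsum_eq_sum_of_fintype]
  exact Finset.sum_nonneg fun v _ => (hg.1 v).1

lemma cone_reachable {H : SimpleGraph W} (x y : Option W) : (cone H).Reachable x y := by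
  have hn : ∀ z : Option W, (cone H).Reachable none z := by
    intro z
    match z with
    | none => exact Reachable.refl _
    | some a => exact SimpleGraph.Adj.reachable (show (cone H).Adj none (some a) from trivial)
  exact (hn x).symm.trans (hn y)

lemma cone_connected {H : SimpleGraph W} : (cone H).Connected := by
  haveI : Nonempty (Option W) := ⟨none⟩
  exact ⟨fun x y => cone_reachable x y⟩

lemma cone_dist_two {H : SimpleGraph W} {a b : W} (hne : a ≠ b) (hnadj : ¬H.Adj a b) :
    (cone H).dist (some a) (some b) = 2 := by
  have hle : (cone H).dist (some a) (some b) ≤ 2 := by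
    have := dist_le (Walk.cons (show (cone H).Adj (some a) none from trivial)
      (Walk.cons (show (cone H).Adj none (some b) from trivial) Walk.nil))
    simpa using this
  have h0 : (cone H).dist (some a) (some b) ≠ 0 := by
    intro h
    rcases SimpleGraph.dist_eq_zero_iff_eq_or_not_reachable.mp h with h | h
    · exact hne (Option.some_injective _ h)
    · exact h (cone_reachable _ _)
  have h1 : (cone H).dist (some a) (some b) ≠ 1 := by
    intro h
    have h2 : (cone H).Adj (some a) (some b) := SimpleGraph.dist_eq_one_iff_adj.mp h
    exact hnadj h2
  omega

lemma bucket_mem_Sset_H {H : SimpleGraph W} {a b c : W} (hca : c ≠ a) (hcb : c ≠ b)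
    (h : (H.Adj b a ∧ H.Adj a c ∧ ¬H.Adj b c) ∨ (H.Adj a b ∧ H.Adj b c ∧ ¬H.Adj a c)) :
    c ∈ Sset H a b := by
  rcases h with ⟨hba, hac, hbc⟩ | ⟨hab, hbc, hac⟩
  · refine Or.inl ⟨Walk.cons hba (Walk.cons hac Walk.nil), ?_, by simp⟩
    have hle : H.dist b c ≤ 2 := by
      have := dist_le (Walk.cons hba (Walk.cons hac Walk.nil))
      simpa using this
    have h0 : H.dist b c ≠ 0 := by
      intro h
      rcases SimpleGraph.dist_eq_zero_iff_eq_or_not_reachable.mp h with h | h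
      · exact hcb h.symm
      · exact h (Walk.cons hba (Walk.cons hac Walk.nil)).reachable
    have h1 : H.dist b c ≠ 1 := fun h => hbc (SimpleGraph.dist_eq_one_iff_adj.mp h)
    simp only [Walk.length_cons, Walk.length_nil]
    omega
  · refine Or.inr ⟨Walk.cons hab (Walk.cons hbc Walk.nil), ?_, by simp⟩
    have hle : H.dist a c ≤ 2 := by
      have := dist_le (Walk.cons hab (Walk.cons hbc Walk.nil))
      simpa using this
    have h0 : H.dist a c ≠ 0 := by
      intro h
      rcases SimpleGraph.dist_eq_zero_iff_eq_or_not_reachable.mp h with h | h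
      · exact hca h.symm
      · exact h (Walk.cons hab (Walk.cons hbc Walk.nil)).reachable
    have h1 : H.dist a c ≠ 1 := fun h => hac (SimpleGraph.dist_eq_one_iff_adj.mp h)
    simp only [Walk.length_cons, Walk.length_nil]
    omega

lemma bucket_mem_Sset_cone {H : SimpleGraph W} {a b c : W} (hca : c ≠ a) (hcb : c ≠ b)
    (h : (H.Adj b a ∧ H.Adj a c ∧ ¬H.Adj b c) ∨ (H.Adj a b ∧ H.Adj b c ∧ ¬H.Adj a c)) :
    (some c) ∈ Sset (cone H) (some a) (some b) := by
  rcases h with ⟨hba, hac, hbc⟩ | ⟨hab, hbc, hac⟩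
  · refine Or.inl ⟨Walk.cons (show (cone H).Adj (some b) (some a) from hba)
      (Walk.cons (show (cone H).Adj (some a) (some c) from hac) Walk.nil), ?_, by simp⟩
    rw [cone_dist_two (Ne.symm hcb) hbc]
    simp
  · refine Or.inr ⟨Walk.cons (show (cone H).Adj (some a) (some b) from hab)
      (Walk.cons (show (cone H).Adj (some b) (some c) from hbc) Walk.nil), ?_, by simp⟩
    rw [cone_dist_two (Ne.symm hca) hac]
    simp

end AuxProof3

section AuxProof4
open SimpleGraph Walk
variable {V W : Type*}

lemma lex_reachable {G : SimpleGraph V} {H : SimpleGraph W} [Fintype V]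
    (hG : G.Connected) (hV : 1 < Fintype.card V) (x y : V × W) :
    (lexProd G H).Reachable x y := by
  obtain ⟨u, a⟩ := x; obtain ⟨w, c⟩ := y
  by_cases huw : u = w
  · subst huw
    by_cases hac : a = c
    · subst hac; exact Reachable.refl _
    · obtain ⟨v, hv⟩ := exists_adj_of_connected hG hV u
      exact (Walk.cons (show (lexProd G H).Adj (u, a) (v, a) from Or.inl hv)
        (Walk.cons (show (lexProd G H).Adj (v, a) (u, c) from Or.inl hv.symm) Walk.nil)).reachable
  · obtain ⟨p⟩ := hG.preconnected u w
    obtain ⟨P, -⟩ := exists_lift_walk (H := H) huw p a c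
    exact P.reachable

lemma copy_srf_H {G : SimpleGraph V} {H : SimpleGraph W} [Fintype V] [Fintype W]
    (hG : G.Connected) (hV : 1 < Fintype.card V) (hH : H.Connected)
    {g : V × W → ℝ} (hg : IsSRF (lexProd G H) g) (u : V) :
    IsSRF H (fun c => g (u, c)) := by
  refine ⟨fun c => hg.1 (u, c), fun a b hab => ?_⟩
  have hsub : Sset (lexProd G H) (u, a) (u, b) ⊆ Prod.mk u '' Sset H a b := by
    intro z hz
    rcases Sset_lex_same_subset hG hV hab hz with rfl | rfl | ⟨c, rfl, hca, hcb, hpat⟩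
    · exact ⟨a, mem_Sset_left (hH.preconnected b a), rfl⟩
    · exact ⟨b, mem_Sset_right (hH.preconnected a b), rfl⟩
    · exact ⟨c, bucket_mem_Sset_H hca hcb hpat, rfl⟩
  calc (1:ℝ) ≤ ∑ᶠ z ∈ Sset (lexProd G H) (u, a) (u, b), g z := hg.2 _ _ (by simp [hab])
    _ ≤ ∑ᶠ z ∈ Prod.mk u '' Sset H a b, g z :=
        finsum_mem_le_finsum_mem (fun z => (hg.1 z).1) hsub
    _ = ∑ᶠ c ∈ Sset H a b, g (u, c) :=
        finsum_mem_image (fun c _ c' _ h => congrArg Prod.snd h)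

lemma copy_srf_cone {G : SimpleGraph V} {H : SimpleGraph W} [Fintype V] [Fintype W]
    (hG : G.Connected) (hV : 1 < Fintype.card V)
    (hd : ∀ a : W, ∃ b, b ≠ a ∧ ¬H.Adj a b)
    {g : V × W → ℝ} (hg : IsSRF (lexProd G H) g) (u : V) :
    IsSRF (cone H) (fun o => Option.elim o 0 (fun c => g (u, c))) := by
  set h : Option W → ℝ := fun o => Option.elim o 0 (fun c => g (u, c)) with hh
  have h0 : ∀ o, 0 ≤ h o := by
    rintro (_ | c)
    · simp [hh]
    · exact (hg.1 (u, c)).1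
  refine ⟨?_, ?_⟩
  · rintro (_ | c)
    · simp [hh]
    · exact hg.1 (u, c)
  · have apex : ∀ a : W, 1 ≤ ∑ᶠ z ∈ Sset (cone H) none (some a), h z := by
      intro a
      obtain ⟨b, hba, hnadj⟩ := hd a
      have hpair : (1:ℝ) ≤ g (u, a) + g (u, b) := by
        have hsub : Sset (lexProd G H) (u, a) (u, b) ⊆ {(u, a), (u, b)} := by
          intro z hz
          rcases Sset_lex_same_subset hG hV (Ne.symm hba) hz with rfl | rfl | ⟨c, rfl, hca, hcb, hpat⟩
          · exact Set.mem_insert _ _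
          · exact Set.mem_insert_of_mem _ rfl
          · rcases hpat with ⟨h1, -, -⟩ | ⟨h1, -, -⟩
            · exact absurd h1.symm hnadj
            · exact absurd h1 hnadj
        calc (1:ℝ) ≤ ∑ᶠ z ∈ Sset (lexProd G H) (u, a) (u, b), g z :=
              hg.2 _ _ (by simp [Ne.symm hba])
          _ ≤ ∑ᶠ z ∈ ({(u, a), (u, b)} : Set (V × W)), g z :=
              finsum_mem_le_finsum_mem (fun z => (hg.1 z).1) hsub
          _ = g (u, a) + g (u, b) := finsum_mem_pair (by simp [Ne.symm hba])
      have hmemB : (some b) ∈ Sset (cone H) none (some a) := by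
        refine Or.inl ⟨Walk.cons (show (cone H).Adj (some a) none from trivial)
          (Walk.cons (show (cone H).Adj none (some b) from trivial) Walk.nil), ?_, by simp⟩
        rw [cone_dist_two (Ne.symm hba) hnadj]
        simp
      have hsub2 : ({some a, some b} : Set (Option W)) ⊆ Sset (cone H) none (some a) := by
        rintro z (rfl | rfl)
        · exact mem_Sset_right (cone_reachable _ _)
        · exact hmemB
      calc (1:ℝ) ≤ g (u, a) + g (u, b) := hpair
        _ = ∑ᶠ z ∈ ({some a, some b} : Set (Option W)), h z := by
            rw [finsum_mem_pair (show (some a : Option W) ≠ some b by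
              simpa using Ne.symm hba)]
            simp [hh]
        _ ≤ ∑ᶠ z ∈ Sset (cone H) none (some a), h z :=
            finsum_mem_le_finsum_mem h0 hsub2
    rintro (_ | a) (_ | b) hxy
    · exact absurd rfl hxy
    · exact apex b
    · rw [Sset_comm]; exact apex a
    · have hab : a ≠ b := fun h => hxy (by rw [h])
      have hsub : Sset (lexProd G H) (u, a) (u, b) ⊆
          Prod.mk u '' {c | (some c) ∈ Sset (cone H) (some a) (some b)} := by
        intro z hz
        rcases Sset_lex_same_subset hG hV hab hz with rfl | rfl | ⟨c, rfl, hca, hcb, hpat⟩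
        · exact ⟨a, mem_Sset_left (cone_reachable _ _), rfl⟩
        · exact ⟨b, mem_Sset_right (cone_reachable _ _), rfl⟩
        · exact ⟨c, bucket_mem_Sset_cone hca hcb hpat, rfl⟩
      calc (1:ℝ) ≤ ∑ᶠ z ∈ Sset (lexProd G H) (u, a) (u, b), g z := hg.2 _ _ (by simp [hab])
        _ ≤ ∑ᶠ z ∈ Prod.mk u '' {c | (some c) ∈ Sset (cone H) (some a) (some b)}, g z :=
            finsum_mem_le_finsum_mem (fun z => (hg.1 z).1) hsub
        _ = ∑ᶠ c ∈ {c | (some c) ∈ Sset (cone H) (some a) (some b)}, g (u, c) :=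
            finsum_mem_image (fun c _ c' _ h => congrArg Prod.snd h)
        _ = ∑ᶠ c ∈ {c | (some c) ∈ Sset (cone H) (some a) (some b)}, h (some c) := by
            simp [hh]
        _ = ∑ᶠ z ∈ (some '' {c | (some c) ∈ Sset (cone H) (some a) (some b)}), h z :=
            (finsum_mem_image (fun c _ c' _ h => Option.some_injective _ h)).symm
        _ ≤ ∑ᶠ z ∈ Sset (cone H) (some a) (some b), h z :=
            finsum_mem_le_finsum_mem h0 (by rintro z ⟨c, hc, rfl⟩; exact hc)

lemma exists_nonadj [Fintype W] {H : SimpleGraph W} (hd : 2 < H.diam) (a : W) :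
    ∃ b, b ≠ a ∧ ¬H.Adj a b := by
  by_contra hcon
  push_neg at hcon
  have hall : ∀ u v : W, H.edist u v ≤ 2 := by
    intro u v
    by_cases huv : u = v
    · subst huv; simp
    by_cases hadj : H.Adj u v
    · rw [SimpleGraph.edist_eq_one_iff_adj.mpr hadj]; norm_num
    · have hua : u ≠ a := by
        rintro rfl
        exact hadj (hcon v (Ne.symm huv))
      have hva : v ≠ a := by
        rintro rfl
        exact hadj (hcon u huv).symm
      calc H.edist u v ≤ H.edist u a + H.edist a v := H.edist_triangle
        _ ≤ 1 + 1 := add_le_add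
            (le_of_eq (SimpleGraph.edist_eq_one_iff_adj.mpr (hcon u hua).symm))
            (le_of_eq (SimpleGraph.edist_eq_one_iff_adj.mpr (hcon v hva)))
        _ = 2 := by norm_num
  have hed : H.ediam ≤ 2 := ediam_le_of_edist_le hall
  have hdd : H.diam ≤ 2 := by
    have := ENat.toNat_le_toNat hed (by norm_num)
    simpa [SimpleGraph.diam] using this
  omega

lemma copy_bound {G : SimpleGraph V} {H : SimpleGraph W} [Fintype V] [Fintype W]
    (hG : G.Connected) (hV : 1 < Fintype.card V)
    (hcase : (H.Connected ∧ H.diam ≤ 2 ∧ sdimf H = (Fintype.card W : ℝ) / 2) ∨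
      (2 < H.diam ∧ sdimf (cone H) = (Fintype.card W : ℝ) / 2))
    {g : V × W → ℝ} (hg : IsSRF (lexProd G H) g) (u : V) :
    (Fintype.card W : ℝ) / 2 ≤ ∑ c : W, g (u, c) := by
  rcases hcase with ⟨hH, -, hs⟩ | ⟨hd, hs⟩
  · have hf := copy_srf_H hG hV hH hg u
    have hle : sdimf H ≤ ∑ᶠ c : W, g (u, c) := csInf_le (sdimf_bddBelow H) ⟨_, hf, rfl⟩
    rw [hs, finsum_eq_sum_of_fintype] at hle
    exact hle
  · have hf := copy_srf_cone hG hV (fun a => exists_nonadj hd a) hg u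
    have hle : sdimf (cone H) ≤ ∑ᶠ o : Option W, (Option.elim o 0 (fun c => g (u, c))) :=
      csInf_le (sdimf_bddBelow _) ⟨_, hf, rfl⟩
    rw [hs, finsum_eq_sum_of_fintype, Fintype.sum_option] at hle
    simpa using hle

end AuxProof4


/-- Let `G` and `H` each have order at least two, with `G` connected.
If either (i) `H` is connected with `diam(H) ≤ 2` and `sdim_f(H) = |V(H)|/2`, or
(ii) `diam(H) > 2` and `sdim_f(K₁ ⊙ H) = |V(H)|/2`, then
`sdim_f(G[H]) = |V(G)|·|V(H)|/2`. -/
theorem sdimf_lexProd_eq_half {V W : Type*} [Fintype V] [Fintype W]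
    (G : SimpleGraph V) (H : SimpleGraph W)
    (hG : G.Connected) (hn : 2 ≤ Fintype.card V) (hm : 2 ≤ Fintype.card W)
    (hcase :
      (H.Connected ∧ H.diam ≤ 2 ∧ sdimf H = (Fintype.card W : ℝ) / 2) ∨
      (2 < H.diam ∧ sdimf (cone H) = (Fintype.card W : ℝ) / 2)) :
    sdimf (lexProd G H) = (Fintype.card V : ℝ) * (Fintype.card W : ℝ) / 2 := by

  have hV : 1 < Fintype.card V := hn
  have hconstSRF : IsSRF (lexProd G H) (fun _ => (1/2 : ℝ)) := by
    refine ⟨fun v => by norm_num, fun x y hxy => ?_⟩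
    have hsub : ({x, y} : Set (V × W)) ⊆ Sset (lexProd G H) x y := by
      rintro z (rfl | rfl)
      · exact mem_Sset_left (lex_reachable hG hV _ _)
      · exact mem_Sset_right (lex_reachable hG hV _ _)
    calc (1:ℝ) = ∑ᶠ z ∈ ({x, y} : Set (V × W)), (1/2 : ℝ) := by
          rw [finsum_mem_pair hxy]; norm_num
      _ ≤ _ := finsum_mem_le_finsum_mem (fun z => by norm_num) hsub
  have hmemset : (Fintype.card V : ℝ) * (Fintype.card W : ℝ) / 2 ∈
      {s : ℝ | ∃ g : V × W → ℝ, IsSRF (lexProd G H) g ∧ s = ∑ᶠ v, g v} := by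
    refine ⟨_, hconstSRF, ?_⟩
    rw [finsum_eq_sum_of_fintype, Finset.sum_const, Finset.card_univ, Fintype.card_prod,
      nsmul_eq_mul]
    push_cast
    ring
  apply le_antisymm
  · exact csInf_le (sdimf_bddBelow _) hmemset
  · apply le_csInf ⟨_, hmemset⟩
    rintro s ⟨g, hg, rfl⟩
    rw [finsum_eq_sum_of_fintype, Fintype.sum_prod_type]
    calc (Fintype.card V : ℝ) * (Fintype.card W : ℝ) / 2
        = (Finset.univ : Finset V).card • ((Fintype.card W : ℝ) / 2) := by
          rw [Finset.card_univ, nsmul_eq_mul]; ring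
      _ ≤ ∑ u : V, ∑ c : W, g (u, c) :=
          Finset.card_nsmul_le_sum _ _ _ (fun u _ => copy_bound hG hV hcase hg u)
end

section
/- Let G and H be connected graphs of order at least two. Then max{ 2·sdim_f(G), 2·sdim_f(H) } ≤ sdim_f(G □ H) ≤ min{ |M(G)|·sdim_f(H), |M(H)|·sdim_f(G) }. -/
open SimpleGraph

/-! ### Auxiliary lemmas -/

section Aux

variable {V : Type*} {W : Type*}

lemma finsum_mem_set_eq [Fintype V] (S : Set V) (f : V → ℝ) :
    ∑ᶠ z ∈ S, f z = ∑ z ∈ (Set.toFinite S).toFinset, f z :=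
  finsum_mem_eq_finite_toFinset_sum f (Set.toFinite S)

lemma between_iff {G : SimpleGraph V} (hG : G.Connected) (x y z : V) :
    (∃ p : G.Walk y z, p.length = G.dist y z ∧ x ∈ p.support) ↔
      G.dist y x + G.dist x z = G.dist y z := by
  classical
  constructor
  · rintro ⟨p, hlen, hx⟩
    have h1 : G.dist y x ≤ (p.takeUntil x hx).length := G.dist_le _
    have h2 : G.dist x z ≤ (p.dropUntil x hx).length := G.dist_le _
    have h3 := congrArg Walk.length (p.take_spec hx)
    rw [Walk.length_append] at h3
    have htri : G.dist y z ≤ G.dist y x + G.dist x z := hG.dist_triangle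
    omega
  · intro h
    obtain ⟨p, hp⟩ := hG.exists_walk_length_eq_dist y x
    obtain ⟨q, hq⟩ := hG.exists_walk_length_eq_dist x z
    exact ⟨p.append q, by rw [Walk.length_append, hp, hq, h],
      by rw [Walk.mem_support_append_iff]; exact Or.inl p.end_mem_support⟩

lemma mem_Sset_iff {G : SimpleGraph V} (hG : G.Connected) {x y z : V} :
    z ∈ Sset G x y ↔
      (G.dist y x + G.dist x z = G.dist y z ∨ G.dist x y + G.dist y z = G.dist x z) := by
  unfold Sset
  rw [Set.mem_setOf_eq, between_iff hG x y z, between_iff hG y x z]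

lemma self_mem_Sset {G : SimpleGraph V} (hG : G.Connected) (x y : V) :
    x ∈ Sset G x y := by
  rw [mem_Sset_iff hG]
  left
  rw [SimpleGraph.dist_self, add_zero]

lemma dist_boxProd [Fintype V] [Fintype W] {G : SimpleGraph V} {H : SimpleGraph W}
    (hG : G.Connected) (hH : H.Connected) (x y : V) (u v : W) :
    (G.boxProd H).dist (x, u) (y, v) = G.dist x y + H.dist u v := by
  have hGH : (G.boxProd H).Connected := hG.boxProd hH
  refine le_antisymm ?_ ?_
  · obtain ⟨p, hp⟩ := hG.exists_walk_length_eq_dist x y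
    obtain ⟨q, hq⟩ := hH.exists_walk_length_eq_dist u v
    have hle := (G.boxProd H).dist_le
      ((Walk.boxProdLeft H u p).append (Walk.boxProdRight G y q))
    rw [Walk.length_append] at hle
    have l1 : (Walk.boxProdLeft H u p).length = p.length := by
      unfold Walk.boxProdLeft; exact Walk.length_map ..
    have l2 : (Walk.boxProdRight G y q).length = q.length := by
      unfold Walk.boxProdRight; exact Walk.length_map ..
    rw [l1, l2, hp, hq] at hle
    exact hle
  · obtain ⟨p, hp⟩ := hGH.exists_walk_length_eq_dist (x, u) (y, v)
    rw [← hp]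
    have key : ∀ (s t : V × W) (p : (G.boxProd H).Walk s t),
        G.dist s.1 t.1 + H.dist s.2 t.2 ≤ p.length := by
      intro s t p
      induction p with
      | nil => simp
      | @cons a b c h q ih =>
        rw [SimpleGraph.boxProd_adj] at h
        rw [Walk.length_cons]
        rcases h with ⟨ha, he⟩ | ⟨ha, he⟩
        · have t0 : G.dist a.1 b.1 ≤ 1 := by
            have := G.dist_le (Walk.cons ha Walk.nil)
            simpa using this
          have t1 : G.dist a.1 c.1 ≤ G.dist a.1 b.1 + G.dist b.1 c.1 := hG.dist_triangle
          have t2 : H.dist a.2 c.2 = H.dist b.2 c.2 := by rw [he]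
          omega
        · have t0 : H.dist a.2 b.2 ≤ 1 := by
            have := H.dist_le (Walk.cons ha Walk.nil)
            simpa using this
          have t1 : H.dist a.2 c.2 ≤ H.dist a.2 b.2 + H.dist b.2 c.2 := hH.dist_triangle
          have t2 : G.dist a.1 c.1 = G.dist b.1 c.1 := by rw [he]
          omega
    exact key _ _ p

lemma mem_Sset_boxProd [Fintype V] [Fintype W] {G : SimpleGraph V} {H : SimpleGraph W}
    (hG : G.Connected) (hH : H.Connected) {x y a : V} {u v b : W} :
    (a, b) ∈ Sset (G.boxProd H) (x, u) (y, v) ↔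
      (G.dist y x + G.dist x a = G.dist y a ∧ H.dist v u + H.dist u b = H.dist v b) ∨
      (G.dist x y + G.dist y a = G.dist x a ∧ H.dist u v + H.dist v b = H.dist u b) := by
  rw [mem_Sset_iff (hG.boxProd hH)]
  simp only [dist_boxProd hG hH]
  have t1 : G.dist y a ≤ G.dist y x + G.dist x a := hG.dist_triangle
  have t2 : H.dist v b ≤ H.dist v u + H.dist u b := hH.dist_triangle
  have t3 : G.dist x a ≤ G.dist x y + G.dist y a := hG.dist_triangle
  have t4 : H.dist u b ≤ H.dist u v + H.dist v b := hH.dist_triangle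
  omega

lemma exists_adj {G : SimpleGraph V} [Fintype V] (hG : G.Connected)
    (hc : 1 < Fintype.card V) (a : V) : ∃ b, G.Adj a b := by
  obtain ⟨b, hb⟩ := Fintype.exists_ne_of_one_lt_card hc a
  obtain ⟨p⟩ := hG.preconnected a b
  cases p with
  | nil => exact absurd rfl hb.symm
  | cons h q => exact ⟨_, h⟩

/-- Extension lemma: there is a vertex `a` maximally distant from `y`
with `x` between `y` and `a`. -/
lemma exists_maxDist_extension {G : SimpleGraph V} [Fintype V] (hG : G.Connected)
    (x y : V) :
    ∃ a, G.dist y x + G.dist x a = G.dist y a ∧ MaxDistFrom G a y := by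
  classical
  set S : Finset V := Finset.univ.filter (fun b => G.dist y x + G.dist x b = G.dist y b)
    with hS
  have hxS : x ∈ S := by
    simp [hS, SimpleGraph.dist_self]
  obtain ⟨a, haS, hmax⟩ := S.exists_max_image (fun b => G.dist y b) ⟨x, hxS⟩
  have haP : G.dist y x + G.dist x a = G.dist y a := by
    simpa [hS] using haS
  refine ⟨a, haP, ?_⟩
  intro w hw
  by_contra hlt
  push_neg at hlt
  have hadj : G.dist a w ≤ 1 := by
    have := G.dist_le (Walk.cons hw Walk.nil); simpa using this
  have htri : G.dist y w ≤ G.dist y a + G.dist a w := hG.dist_triangle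
  have hcomm : G.dist w y = G.dist y w := SimpleGraph.dist_comm ..
  have hcomm0 : G.dist a y = G.dist y a := SimpleGraph.dist_comm ..
  have hyw : G.dist y w = G.dist y a + 1 := by omega
  have htri2 : G.dist x w ≤ G.dist x a + G.dist a w := hG.dist_triangle
  have htri3 : G.dist y w ≤ G.dist y x + G.dist x w := hG.dist_triangle
  have hwP : G.dist y x + G.dist x w = G.dist y w := by omega
  have hwS : w ∈ S := by simp [hS, hwP]
  have := hmax w hwS
  omega

/-- If `a` is maximally distant from some vertex, then `a ∈ M(G)`. -/
lemma mem_Mset_of_maxDistFrom {G : SimpleGraph V} [Fintype V] (hG : G.Connected)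
    (hc : 1 < Fintype.card V) {a y : V} (h : MaxDistFrom G a y) : a ∈ Mset G := by
  classical
  set T : Finset V := Finset.univ.filter (fun b => MaxDistFrom G a b) with hT
  have hyT : y ∈ T := by simp [hT, h]
  obtain ⟨c, hcT, hmax⟩ := T.exists_max_image (fun b => G.dist a b) ⟨y, hyT⟩
  have hcMD : MaxDistFrom G a c := by simpa [hT] using hcT
  have hac : a ≠ c := by
    rintro rfl
    obtain ⟨n, hn⟩ := exists_adj hG hc a
    have h1 : G.dist n a ≤ G.dist a a := hcMD n hn
    rw [SimpleGraph.dist_self] at h1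
    have h2 : G.dist n a = 0 := Nat.le_zero.mp h1
    have h3 : n = a := by
      have := (hG.dist_eq_zero_iff (u := n) (v := a)).mp h2
      exact this
    exact G.loopless.irrefl a (h3 ▸ hn)
  have hcMD2 : MaxDistFrom G c a := by
    intro w hw
    by_contra hlt
    push_neg at hlt
    have hadj : G.dist c w ≤ 1 := by
      have := G.dist_le (Walk.cons hw Walk.nil); simpa using this
    have hcomm : G.dist w a = G.dist a w := SimpleGraph.dist_comm ..
    have hcomm2 : G.dist c a = G.dist a c := SimpleGraph.dist_comm ..
    have htri : G.dist a w ≤ G.dist a c + G.dist c w := hG.dist_triangle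
    have haw : G.dist a w = G.dist a c + 1 := by omega
    have hwT : w ∈ T := by
      simp only [hT, Finset.mem_filter, Finset.mem_univ, true_and]
      intro z hz
      have hz1 : G.dist z c ≤ G.dist a c := hcMD z hz
      have htz : G.dist z w ≤ G.dist z c + G.dist c w := hG.dist_triangle
      omega
    have := hmax w hwT
    omega
  exact ⟨c, hac, hcMD, hcMD2⟩

lemma exists_mem_Mset_extension {G : SimpleGraph V} [Fintype V] (hG : G.Connected)
    (hc : 1 < Fintype.card V) (x y : V) :
    ∃ a, G.dist y x + G.dist x a = G.dist y a ∧ a ∈ Mset G := by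
  obtain ⟨a, h1, h2⟩ := exists_maxDist_extension hG x y
  exact ⟨a, h1, mem_Mset_of_maxDistFrom hG hc h2⟩

lemma Mset_nonempty {G : SimpleGraph V} [Fintype V] (hG : G.Connected)
    (hc : 1 < Fintype.card V) : (Mset G).Nonempty := by
  have : Nonempty V := Fintype.card_pos_iff.mp (by omega)
  obtain ⟨x⟩ := this
  obtain ⟨a, _, ha⟩ := exists_mem_Mset_extension hG hc x x
  exact ⟨a, ha⟩

/-- The constant-1 function is a strong resolving function. -/
lemma isSRF_one {G : SimpleGraph V} [Fintype V] (hG : G.Connected) :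
    IsSRF G (fun _ => (1 : ℝ)) := by
  refine ⟨fun v => ⟨zero_le_one, le_rfl⟩, fun x y hxy => ?_⟩
  rw [finsum_mem_set_eq]
  have hx : x ∈ (Set.toFinite (Sset G x y)).toFinset := by
    rw [Set.Finite.mem_toFinset]
    exact self_mem_Sset hG x y
  exact Finset.single_le_sum (fun i _ => zero_le_one) hx

lemma sdimf_set_nonempty {G : SimpleGraph V} [Fintype V] (hG : G.Connected) :
    {s : ℝ | ∃ g : V → ℝ, IsSRF G g ∧ s = ∑ᶠ v, g v}.Nonempty :=
  ⟨_, fun _ => 1, isSRF_one hG, rfl⟩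

lemma sdimf_set_bddBelow {G : SimpleGraph V} [Fintype V] :
    BddBelow {s : ℝ | ∃ g : V → ℝ, IsSRF G g ∧ s = ∑ᶠ v, g v} := by
  refine ⟨0, ?_⟩
  rintro s ⟨g, hg, rfl⟩
  rw [finsum_eq_sum_of_fintype]
  exact Finset.sum_nonneg fun v _ => (hg.1 v).1

lemma sdimf_le {G : SimpleGraph V} [Fintype V] {g : V → ℝ} (hg : IsSRF G g) :
    sdimf G ≤ ∑ᶠ v, g v :=
  csInf_le sdimf_set_bddBelow ⟨g, hg, rfl⟩

section Main

variable {V : Type*} {W : Type*} [Fintype V] [Fintype W]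
variable {G : SimpleGraph V} {H : SimpleGraph W}

/-- Key counting lemma: for `x ≠ y`, `u ≠ v`, any SRF of `G □ H` puts weight at least `2`
on `S{x,y} × S{u,v}`. -/
lemma key_two (hG : G.Connected) (hH : H.Connected) {x y : V} {u v : W}
    (hxy : x ≠ y) (huv : u ≠ v) {g : V × W → ℝ} (hg : IsSRF (G.boxProd H) g) :
    2 ≤ ∑ p ∈ (Set.toFinite (Sset G x y)).toFinset ×ˢ
          (Set.toFinite (Sset H u v)).toFinset, g p := by
  classical
  set A := (Set.toFinite (Sset G x y)).toFinset with hA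
  set B := (Set.toFinite (Sset H u v)).toFinset with hB
  set S1 := (Set.toFinite (Sset (G.boxProd H) (x, u) (y, v))).toFinset with hS1
  set S2 := (Set.toFinite (Sset (G.boxProd H) (x, v) (y, u))).toFinset with hS2
  have hgpos : ∀ p : V × W, 0 ≤ g p := fun p => (hg.1 p).1
  have hGpos : 0 < G.dist x y := hG.pos_dist_of_ne hxy
  have hHpos : 0 < H.dist u v := hH.pos_dist_of_ne huv
  have hGc : G.dist y x = G.dist x y := SimpleGraph.dist_comm ..
  have hHc : H.dist v u = H.dist u v := SimpleGraph.dist_comm ..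
  have hsub1 : S1 ⊆ A ×ˢ B := by
    rintro ⟨a, b⟩ hp
    rw [hS1, Set.Finite.mem_toFinset, mem_Sset_boxProd hG hH] at hp
    rw [Finset.mem_product, hA, hB, Set.Finite.mem_toFinset, Set.Finite.mem_toFinset,
      mem_Sset_iff hG, mem_Sset_iff hH]
    rcases hp with ⟨h1, h2⟩ | ⟨h1, h2⟩
    · exact ⟨Or.inl h1, Or.inl h2⟩
    · exact ⟨Or.inr h1, Or.inr h2⟩
  have hsub2 : S2 ⊆ A ×ˢ B := by
    rintro ⟨a, b⟩ hp
    rw [hS2, Set.Finite.mem_toFinset, mem_Sset_boxProd hG hH] at hp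
    rw [Finset.mem_product, hA, hB, Set.Finite.mem_toFinset, Set.Finite.mem_toFinset,
      mem_Sset_iff hG, mem_Sset_iff hH]
    rcases hp with ⟨h1, h2⟩ | ⟨h1, h2⟩
    · exact ⟨Or.inl h1, Or.inr h2⟩
    · exact ⟨Or.inr h1, Or.inl h2⟩
  have hdisj : Disjoint S1 S2 := by
    rw [Finset.disjoint_left]
    rintro ⟨a, b⟩ hp1 hp2
    rw [hS1, Set.Finite.mem_toFinset, mem_Sset_boxProd hG hH] at hp1
    rw [hS2, Set.Finite.mem_toFinset, mem_Sset_boxProd hG hH] at hp2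
    omega
  have h1 : 1 ≤ ∑ p ∈ S1, g p := by
    have := hg.2 (x, u) (y, v) (fun h => hxy (congrArg Prod.fst h))
    rwa [finsum_mem_set_eq] at this
  have h2 : 1 ≤ ∑ p ∈ S2, g p := by
    have := hg.2 (x, v) (y, u) (fun h => hxy (congrArg Prod.fst h))
    rwa [finsum_mem_set_eq] at this
  calc (2 : ℝ) ≤ ∑ p ∈ S1, g p + ∑ p ∈ S2, g p := by linarith
    _ = ∑ p ∈ S1 ∪ S2, g p := (Finset.sum_union hdisj).symm
    _ ≤ ∑ p ∈ A ×ˢ B, g p := Finset.sum_le_sum_of_subset_of_nonneg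
        (Finset.union_subset hsub1 hsub2) (fun p _ _ => hgpos p)

/-- Lower bound, `G`-side. -/
lemma two_sdimf_left_le (hG : G.Connected) (hH : H.Connected)
    (hm : 1 < Fintype.card W) {g : V × W → ℝ} (hg : IsSRF (G.boxProd H) g) :
    2 * sdimf G ≤ ∑ᶠ p, g p := by
  classical
  obtain ⟨u0, v0, huv⟩ := Fintype.exists_pair_of_one_lt_card hm
  set B := (Set.toFinite (Sset H u0 v0)).toFinset with hB
  set f0 : V → ℝ := fun a => ∑ b ∈ B, g (a, b) with hf0
  set f : V → ℝ := fun a => min 1 (f0 a / 2) with hf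
  have hgpos : ∀ p : V × W, 0 ≤ g p := fun p => (hg.1 p).1
  have hf0pos : ∀ a, 0 ≤ f0 a := fun a => Finset.sum_nonneg fun b _ => hgpos _
  have hfpos : ∀ a, 0 ≤ f a := fun a =>
    le_min zero_le_one (div_nonneg (hf0pos a) (by norm_num))
  have hsrf : IsSRF G f := by
    refine ⟨fun a => ⟨hfpos a, min_le_left _ _⟩, fun x y hxy => ?_⟩
    set A := (Set.toFinite (Sset G x y)).toFinset with hA
    have h2 : 2 ≤ ∑ a ∈ A, f0 a := by
      have hk := key_two hG hH hxy huv hg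
      rwa [Finset.sum_product] at hk
    rw [finsum_mem_set_eq]
    by_cases hc : ∀ a ∈ A, f0 a < 2
    · have heq : ∑ a ∈ A, f a = ∑ a ∈ A, f0 a / 2 :=
        Finset.sum_congr rfl fun a ha => min_eq_right (by linarith [hc a ha])
      rw [heq, ← Finset.sum_div]
      linarith
    · push_neg at hc
      obtain ⟨a, haA, ha2⟩ := hc
      have h1a : (1 : ℝ) ≤ f a := le_min le_rfl (by linarith)
      calc (1 : ℝ) ≤ f a := h1a
        _ ≤ ∑ a ∈ A, f a := Finset.single_le_sum (fun i _ => hfpos i) haA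
  have hsum : ∑ᶠ v, f v ≤ (∑ᶠ p, g p) / 2 := by
    rw [finsum_eq_sum_of_fintype, finsum_eq_sum_of_fintype]
    have e1 : ∑ a, f a ≤ ∑ a, f0 a / 2 :=
      Finset.sum_le_sum fun a _ => min_le_right _ _
    have e2 : ∑ a, f0 a = ∑ p ∈ Finset.univ ×ˢ B, g p := (Finset.sum_product ..).symm
    have e3 : ∑ p ∈ Finset.univ ×ˢ B, g p ≤ ∑ p : V × W, g p :=
      Finset.sum_le_sum_of_subset_of_nonneg (Finset.subset_univ _) (fun p _ _ => hgpos p)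
    rw [← Finset.sum_div] at e1
    linarith
  have := sdimf_le hsrf
  linarith

/-- Lower bound, `H`-side. -/
lemma two_sdimf_right_le (hG : G.Connected) (hH : H.Connected)
    (hn : 1 < Fintype.card V) {g : V × W → ℝ} (hg : IsSRF (G.boxProd H) g) :
    2 * sdimf H ≤ ∑ᶠ p, g p := by
  classical
  obtain ⟨x0, y0, hxy⟩ := Fintype.exists_pair_of_one_lt_card hn
  set A := (Set.toFinite (Sset G x0 y0)).toFinset with hA
  set f0 : W → ℝ := fun b => ∑ a ∈ A, g (a, b) with hf0
  set f : W → ℝ := fun b => min 1 (f0 b / 2) with hf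
  have hgpos : ∀ p : V × W, 0 ≤ g p := fun p => (hg.1 p).1
  have hf0pos : ∀ b, 0 ≤ f0 b := fun b => Finset.sum_nonneg fun a _ => hgpos _
  have hfpos : ∀ b, 0 ≤ f b := fun b =>
    le_min zero_le_one (div_nonneg (hf0pos b) (by norm_num))
  have hsrf : IsSRF H f := by
    refine ⟨fun b => ⟨hfpos b, min_le_left _ _⟩, fun u v huv => ?_⟩
    set B := (Set.toFinite (Sset H u v)).toFinset with hB
    have h2 : 2 ≤ ∑ b ∈ B, f0 b := by
      have hk := key_two hG hH hxy huv hg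
      rw [Finset.sum_product] at hk
      rwa [Finset.sum_comm] at hk
    rw [finsum_mem_set_eq]
    by_cases hc : ∀ b ∈ B, f0 b < 2
    · have heq : ∑ b ∈ B, f b = ∑ b ∈ B, f0 b / 2 :=
        Finset.sum_congr rfl fun b hb => min_eq_right (by linarith [hc b hb])
      rw [heq, ← Finset.sum_div]
      linarith
    · push_neg at hc
      obtain ⟨b, hbB, hb2⟩ := hc
      have h1b : (1 : ℝ) ≤ f b := le_min le_rfl (by linarith)
      calc (1 : ℝ) ≤ f b := h1b
        _ ≤ ∑ b ∈ B, f b := Finset.single_le_sum (fun i _ => hfpos i) hbB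
  have hsum : ∑ᶠ v, f v ≤ (∑ᶠ p, g p) / 2 := by
    rw [finsum_eq_sum_of_fintype, finsum_eq_sum_of_fintype]
    have e1 : ∑ b, f b ≤ ∑ b, f0 b / 2 :=
      Finset.sum_le_sum fun b _ => min_le_right _ _
    have e2 : ∑ b, f0 b = ∑ p ∈ A ×ˢ (Finset.univ : Finset W), g p := by
      rw [Finset.sum_product]
      exact (Finset.sum_comm ..)
    have e3 : ∑ p ∈ A ×ˢ (Finset.univ : Finset W), g p ≤ ∑ p : V × W, g p :=
      Finset.sum_le_sum_of_subset_of_nonneg (Finset.subset_univ _) (fun p _ _ => hgpos p)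
    rw [← Finset.sum_div] at e1
    linarith
  have := sdimf_le hsrf
  linarith

open Classical in
/-- Spread a weight function on `W` over `M × W`. -/
noncomputable def spread {V W : Type*} (M : Set V) (f : W → ℝ) : V × W → ℝ :=
  fun p => if p.1 ∈ M then f p.2 else 0

open Classical in
lemma spread_apply {V W : Type*} (M : Set V) (f : W → ℝ) (p : V × W) :
    spread M f p = if p.1 ∈ M then f p.2 else 0 := rfl

lemma spread_apply_mem {V W : Type*} {M : Set V} (f : W → ℝ) {p : V × W}
    (h : p.1 ∈ M) : spread M f p = f p.2 := by
  classical rw [spread_apply, if_pos h]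

/-- Upper bound construction, `G`-side: spreading an SRF of `H` over `M(G) × W`. -/
lemma isSRF_boxProd_of_right (hG : G.Connected) (hH : H.Connected)
    (hn : 1 < Fintype.card V) (hm : 1 < Fintype.card W)
    {f : W → ℝ} (hf : IsSRF H f) :
    IsSRF (G.boxProd H) (spread (Mset G) f) := by
  classical
  set gM : V × W → ℝ := spread (Mset G) f with hgM
  have hgMpos : ∀ p : V × W, 0 ≤ gM p := by
    intro p; rw [hgM, spread_apply]; split
    · exact (hf.1 p.2).1
    · exact le_rfl
  refine ⟨fun p => ⟨hgMpos p, ?_⟩, ?_⟩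
  · rw [hgM, spread_apply]; split
    · exact (hf.1 p.2).2
    · exact zero_le_one
  rintro ⟨x, u⟩ ⟨y, v⟩ hne
  set S := (Set.toFinite (Sset (G.boxProd H) (x, u) (y, v))).toFinset with hSdef
  rw [finsum_mem_set_eq]
  by_cases huv : u = v
  · subst huv
    have hxy : x ≠ y := fun h => hne (by rw [h])
    obtain ⟨a, haI, haM⟩ := exists_mem_Mset_extension hG hn x y
    obtain ⟨p, q, hpq⟩ := Fintype.exists_pair_of_one_lt_card hm
    have himg : ∀ b : W, (a, b) ∈ S := by
      intro b
      rw [hSdef, Set.Finite.mem_toFinset, mem_Sset_boxProd hG hH]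
      left
      exact ⟨haI, by rw [SimpleGraph.dist_self, zero_add]⟩
    have hinj : Set.InjOn (fun b : W => (a, b)) (Finset.univ : Finset W) :=
      fun b _ c _ h => congrArg Prod.snd h
    calc (1 : ℝ) ≤ ∑ᶠ z ∈ Sset H p q, f z := hf.2 p q hpq
      _ = ∑ b ∈ (Set.toFinite (Sset H p q)).toFinset, f b := finsum_mem_set_eq ..
      _ ≤ ∑ b : W, f b := Finset.sum_le_sum_of_subset_of_nonneg
          (Finset.subset_univ _) (fun b _ _ => (hf.1 b).1)
      _ = ∑ b : W, gM (a, b) := by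
          rw [hgM]
          exact Finset.sum_congr rfl fun b _ => (spread_apply_mem (p := (a, b)) f haM).symm
      _ = ∑ p ∈ Finset.univ.image (fun b : W => (a, b)), gM p :=
          (Finset.sum_image fun b hb c hc h => hinj hb hc h).symm
      _ ≤ ∑ p ∈ S, gM p := Finset.sum_le_sum_of_subset_of_nonneg
          (fun p hp => by
            obtain ⟨b, _, rfl⟩ := Finset.mem_image.mp hp
            exact himg b)
          (fun p _ _ => hgMpos p)
  · obtain ⟨a1, h1, hM1⟩ := exists_mem_Mset_extension hG hn x y
    obtain ⟨a2, h2, hM2⟩ := exists_mem_Mset_extension hG hn y x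
    set B1 : Finset W := Finset.univ.filter
      (fun b => H.dist v u + H.dist u b = H.dist v b) with hB1
    set B2 : Finset W := Finset.univ.filter
      (fun b => H.dist u v + H.dist v b = H.dist u b) with hB2
    set T1 := B1.image (fun b => (a1, b)) with hT1
    set T2 := B2.image (fun b => (a2, b)) with hT2
    have hHpos : 0 < H.dist u v := hH.pos_dist_of_ne huv
    have hHc : H.dist v u = H.dist u v := SimpleGraph.dist_comm ..
    have hsub1 : T1 ⊆ S := by
      intro p hp
      obtain ⟨b, hb, rfl⟩ := Finset.mem_image.mp hp
      rw [hB1, Finset.mem_filter] at hb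
      rw [hSdef, Set.Finite.mem_toFinset, mem_Sset_boxProd hG hH]
      exact Or.inl ⟨h1, hb.2⟩
    have hsub2 : T2 ⊆ S := by
      intro p hp
      obtain ⟨b, hb, rfl⟩ := Finset.mem_image.mp hp
      rw [hB2, Finset.mem_filter] at hb
      rw [hSdef, Set.Finite.mem_toFinset, mem_Sset_boxProd hG hH]
      exact Or.inr ⟨h2, hb.2⟩
    have hdisj : Disjoint T1 T2 := by
      rw [Finset.disjoint_left]
      rintro ⟨c, b⟩ hp1 hp2
      obtain ⟨b1, hb1, he1⟩ := Finset.mem_image.mp hp1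
      obtain ⟨b2, hb2, he2⟩ := Finset.mem_image.mp hp2
      rw [hB1, Finset.mem_filter] at hb1
      rw [hB2, Finset.mem_filter] at hb2
      have eb1 : b1 = b := congrArg Prod.snd he1
      have eb2 : b2 = b := congrArg Prod.snd he2
      subst eb1; subst eb2
      omega
    have hBdisj : Disjoint B1 B2 := by
      rw [Finset.disjoint_left]
      intro b hb1 hb2
      rw [hB1, Finset.mem_filter] at hb1
      rw [hB2, Finset.mem_filter] at hb2
      omega
    have hBunion : B1 ∪ B2 = (Set.toFinite (Sset H u v)).toFinset := by
      ext b
      rw [Finset.mem_union, hB1, hB2, Finset.mem_filter, Finset.mem_filter,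
        Set.Finite.mem_toFinset, mem_Sset_iff hH]
      simp only [Finset.mem_univ, true_and]
    have hs1 : ∑ p ∈ T1, gM p = ∑ b ∈ B1, f b := by
      rw [hT1, Finset.sum_image (fun b _ c _ h => congrArg Prod.snd h)]
      rw [hgM]
      exact Finset.sum_congr rfl fun b _ => spread_apply_mem (p := (a1, b)) f hM1
    have hs2 : ∑ p ∈ T2, gM p = ∑ b ∈ B2, f b := by
      rw [hT2, Finset.sum_image (fun b _ c _ h => congrArg Prod.snd h)]
      rw [hgM]
      exact Finset.sum_congr rfl fun b _ => spread_apply_mem (p := (a2, b)) f hM2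
    calc (1 : ℝ) ≤ ∑ᶠ z ∈ Sset H u v, f z := hf.2 u v huv
      _ = ∑ b ∈ (Set.toFinite (Sset H u v)).toFinset, f b := finsum_mem_set_eq ..
      _ = ∑ b ∈ B1 ∪ B2, f b := by rw [hBunion]
      _ = ∑ b ∈ B1, f b + ∑ b ∈ B2, f b := Finset.sum_union hBdisj
      _ = ∑ p ∈ T1, gM p + ∑ p ∈ T2, gM p := by rw [hs1, hs2]
      _ = ∑ p ∈ T1 ∪ T2, gM p := (Finset.sum_union hdisj).symm
      _ ≤ ∑ p ∈ S, gM p := Finset.sum_le_sum_of_subset_of_nonneg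
          (Finset.union_subset hsub1 hsub2) (fun p _ _ => hgMpos p)

lemma sum_spread (M : Set V) (f : W → ℝ) :
    ∑ᶠ p : V × W, spread M f p = (M.ncard : ℝ) * ∑ᶠ b, f b := by
  classical
  rw [finsum_eq_sum_of_fintype, finsum_eq_sum_of_fintype, Fintype.sum_prod_type]
  simp only [spread_apply]
  have : ∀ a : V, ∑ b : W, (if a ∈ M then f b else 0)
      = if a ∈ M then (∑ b : W, f b) else 0 := by
    intro a; split <;> simp
  rw [Finset.sum_congr rfl fun a _ => this a, ← Finset.sum_filter,
    Finset.sum_const, nsmul_eq_mul]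
  congr 2
  rw [Set.ncard_eq_toFinset_card M (Set.toFinite M)]
  congr 1
  ext a
  simp [Set.Finite.mem_toFinset]

open Classical in
/-- Spread a weight function on `V` over `V × M`. -/
noncomputable def spread2 {V W : Type*} (M : Set W) (f : V → ℝ) : V × W → ℝ :=
  fun p => if p.2 ∈ M then f p.1 else 0

open Classical in
lemma spread2_apply {V W : Type*} (M : Set W) (f : V → ℝ) (p : V × W) :
    spread2 M f p = if p.2 ∈ M then f p.1 else 0 := rfl

lemma spread2_apply_mem {V W : Type*} {M : Set W} (f : V → ℝ) {p : V × W}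
    (h : p.2 ∈ M) : spread2 M f p = f p.1 := by
  classical rw [spread2_apply, if_pos h]

/-- Upper bound construction, `H`-side: spreading an SRF of `G` over `V × M(H)`. -/
lemma isSRF_boxProd_of_left (hG : G.Connected) (hH : H.Connected)
    (hn : 1 < Fintype.card V) (hm : 1 < Fintype.card W)
    {f : V → ℝ} (hf : IsSRF G f) :
    IsSRF (G.boxProd H) (spread2 (Mset H) f) := by
  classical
  set gM : V × W → ℝ := spread2 (Mset H) f with hgM
  have hgMpos : ∀ p : V × W, 0 ≤ gM p := by
    intro p; rw [hgM, spread2_apply]; split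
    · exact (hf.1 p.1).1
    · exact le_rfl
  refine ⟨fun p => ⟨hgMpos p, ?_⟩, ?_⟩
  · rw [hgM, spread2_apply]; split
    · exact (hf.1 p.1).2
    · exact zero_le_one
  rintro ⟨x, u⟩ ⟨y, v⟩ hne
  set S := (Set.toFinite (Sset (G.boxProd H) (x, u) (y, v))).toFinset with hSdef
  rw [finsum_mem_set_eq]
  by_cases hxy : x = y
  · subst hxy
    have huv : u ≠ v := fun h => hne (by rw [h])
    obtain ⟨c, hcI, hcM⟩ := exists_mem_Mset_extension hH hm u v
    obtain ⟨p, q, hpq⟩ := Fintype.exists_pair_of_one_lt_card hn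
    have himg : ∀ a : V, (a, c) ∈ S := by
      intro a
      rw [hSdef, Set.Finite.mem_toFinset, mem_Sset_boxProd hG hH]
      left
      exact ⟨by rw [SimpleGraph.dist_self, zero_add], hcI⟩
    have hinj : Set.InjOn (fun a : V => (a, c)) (Finset.univ : Finset V) :=
      fun a _ b _ h => congrArg Prod.fst h
    calc (1 : ℝ) ≤ ∑ᶠ z ∈ Sset G p q, f z := hf.2 p q hpq
      _ = ∑ a ∈ (Set.toFinite (Sset G p q)).toFinset, f a := finsum_mem_set_eq ..
      _ ≤ ∑ a : V, f a := Finset.sum_le_sum_of_subset_of_nonneg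
          (Finset.subset_univ _) (fun a _ _ => (hf.1 a).1)
      _ = ∑ a : V, gM (a, c) := by
          rw [hgM]
          exact Finset.sum_congr rfl fun a _ =>
            (spread2_apply_mem (p := (a, c)) f hcM).symm
      _ = ∑ p ∈ Finset.univ.image (fun a : V => (a, c)), gM p :=
          (Finset.sum_image fun a ha b hb h => hinj ha hb h).symm
      _ ≤ ∑ p ∈ S, gM p := Finset.sum_le_sum_of_subset_of_nonneg
          (fun p hp => by
            obtain ⟨a, _, rfl⟩ := Finset.mem_image.mp hp
            exact himg a)
          (fun p _ _ => hgMpos p)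
  · obtain ⟨c1, h1, hM1⟩ := exists_mem_Mset_extension hH hm u v
    obtain ⟨c2, h2, hM2⟩ := exists_mem_Mset_extension hH hm v u
    set A1 : Finset V := Finset.univ.filter
      (fun a => G.dist y x + G.dist x a = G.dist y a) with hA1
    set A2 : Finset V := Finset.univ.filter
      (fun a => G.dist x y + G.dist y a = G.dist x a) with hA2
    set T1 := A1.image (fun a => (a, c1)) with hT1
    set T2 := A2.image (fun a => (a, c2)) with hT2
    have hGpos : 0 < G.dist x y := hG.pos_dist_of_ne hxy
    have hGc : G.dist y x = G.dist x y := SimpleGraph.dist_comm ..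
    have hsub1 : T1 ⊆ S := by
      intro p hp
      obtain ⟨a, ha, rfl⟩ := Finset.mem_image.mp hp
      rw [hA1, Finset.mem_filter] at ha
      rw [hSdef, Set.Finite.mem_toFinset, mem_Sset_boxProd hG hH]
      exact Or.inl ⟨ha.2, h1⟩
    have hsub2 : T2 ⊆ S := by
      intro p hp
      obtain ⟨a, ha, rfl⟩ := Finset.mem_image.mp hp
      rw [hA2, Finset.mem_filter] at ha
      rw [hSdef, Set.Finite.mem_toFinset, mem_Sset_boxProd hG hH]
      exact Or.inr ⟨ha.2, h2⟩
    have hdisj : Disjoint T1 T2 := by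
      rw [Finset.disjoint_left]
      rintro ⟨a, c⟩ hp1 hp2
      obtain ⟨a1, ha1, he1⟩ := Finset.mem_image.mp hp1
      obtain ⟨a2, ha2, he2⟩ := Finset.mem_image.mp hp2
      rw [hA1, Finset.mem_filter] at ha1
      rw [hA2, Finset.mem_filter] at ha2
      have ea1 : a1 = a := congrArg Prod.fst he1
      have ea2 : a2 = a := congrArg Prod.fst he2
      subst ea1; subst ea2
      omega
    have hAdisj : Disjoint A1 A2 := by
      rw [Finset.disjoint_left]
      intro a ha1 ha2
      rw [hA1, Finset.mem_filter] at ha1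
      rw [hA2, Finset.mem_filter] at ha2
      omega
    have hAunion : A1 ∪ A2 = (Set.toFinite (Sset G x y)).toFinset := by
      ext a
      rw [Finset.mem_union, hA1, hA2, Finset.mem_filter, Finset.mem_filter,
        Set.Finite.mem_toFinset, mem_Sset_iff hG]
      simp only [Finset.mem_univ, true_and]
    have hs1 : ∑ p ∈ T1, gM p = ∑ a ∈ A1, f a := by
      rw [hT1, Finset.sum_image (fun a _ b _ h => congrArg Prod.fst h)]
      rw [hgM]
      exact Finset.sum_congr rfl fun a _ => spread2_apply_mem (p := (a, c1)) f hM1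
    have hs2 : ∑ p ∈ T2, gM p = ∑ a ∈ A2, f a := by
      rw [hT2, Finset.sum_image (fun a _ b _ h => congrArg Prod.fst h)]
      rw [hgM]
      exact Finset.sum_congr rfl fun a _ => spread2_apply_mem (p := (a, c2)) f hM2
    calc (1 : ℝ) ≤ ∑ᶠ z ∈ Sset G x y, f z := hf.2 x y hxy
      _ = ∑ a ∈ (Set.toFinite (Sset G x y)).toFinset, f a := finsum_mem_set_eq ..
      _ = ∑ a ∈ A1 ∪ A2, f a := by rw [hAunion]
      _ = ∑ a ∈ A1, f a + ∑ a ∈ A2, f a := Finset.sum_union hAdisj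
      _ = ∑ p ∈ T1, gM p + ∑ p ∈ T2, gM p := by rw [hs1, hs2]
      _ = ∑ p ∈ T1 ∪ T2, gM p := (Finset.sum_union hdisj).symm
      _ ≤ ∑ p ∈ S, gM p := Finset.sum_le_sum_of_subset_of_nonneg
          (Finset.union_subset hsub1 hsub2) (fun p _ _ => hgMpos p)

lemma sum_spread2 (M : Set W) (f : V → ℝ) :
    ∑ᶠ p : V × W, spread2 M f p = (M.ncard : ℝ) * ∑ᶠ a, f a := by
  classical
  rw [finsum_eq_sum_of_fintype, finsum_eq_sum_of_fintype, Fintype.sum_prod_type_right]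
  simp only [spread2_apply]
  have : ∀ b : W, ∑ a : V, (if b ∈ M then f a else 0)
      = if b ∈ M then (∑ a : V, f a) else 0 := by
    intro b; split <;> simp
  rw [Finset.sum_congr rfl fun b _ => this b, ← Finset.sum_filter,
    Finset.sum_const, nsmul_eq_mul]
  congr 2
  rw [Set.ncard_eq_toFinset_card M (Set.toFinite M)]
  congr 1
  ext b
  simp [Set.Finite.mem_toFinset]

lemma sdimf_nonneg_aux {s : ℝ} (hG : G.Connected)
    (hs : s ∈ {s : ℝ | ∃ g : V → ℝ, IsSRF G g ∧ s = ∑ᶠ v, g v}) : 0 ≤ s := by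
  obtain ⟨g, hg, rfl⟩ := hs
  rw [finsum_eq_sum_of_fintype]
  exact Finset.sum_nonneg fun v _ => (hg.1 v).1

lemma sdimf_boxProd_le_right (hG : G.Connected) (hH : H.Connected)
    (hn : 1 < Fintype.card V) (hm : 1 < Fintype.card W) :
    sdimf (G.boxProd H) ≤ ((Mset G).ncard : ℝ) * sdimf H := by
  have hMpos : 0 < ((Mset G).ncard : ℝ) := by
    have h1 : 0 < (Mset G).ncard :=
      (Set.ncard_pos (Set.toFinite _)).mpr (Mset_nonempty hG hn)
    exact_mod_cast h1
  refine le_of_forall_pos_le_add fun ε hε => ?_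
  have hlt : sdimf H < sdimf H + ε / ((Mset G).ncard : ℝ) :=
    lt_add_of_pos_right _ (div_pos hε hMpos)
  obtain ⟨s, hsmem, hs⟩ := exists_lt_of_csInf_lt (sdimf_set_nonempty hH) hlt
  obtain ⟨f, hf, rfl⟩ := hsmem
  have h1 : sdimf (G.boxProd H) ≤ ((Mset G).ncard : ℝ) * ∑ᶠ b, f b := by
    have := sdimf_le (isSRF_boxProd_of_right hG hH hn hm hf)
    rwa [sum_spread] at this
  have h2 : ((Mset G).ncard : ℝ) * (∑ᶠ b, f b)
      ≤ ((Mset G).ncard : ℝ) * (sdimf H + ε / ((Mset G).ncard : ℝ)) :=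
    mul_le_mul_of_nonneg_left (le_of_lt hs) (le_of_lt hMpos)
  have h3 : ((Mset G).ncard : ℝ) * (sdimf H + ε / ((Mset G).ncard : ℝ))
      = ((Mset G).ncard : ℝ) * sdimf H + ε := by
    rw [mul_add, mul_div_cancel₀ _ (ne_of_gt hMpos)]
  linarith

lemma sdimf_boxProd_le_left (hG : G.Connected) (hH : H.Connected)
    (hn : 1 < Fintype.card V) (hm : 1 < Fintype.card W) :
    sdimf (G.boxProd H) ≤ ((Mset H).ncard : ℝ) * sdimf G := by
  have hMpos : 0 < ((Mset H).ncard : ℝ) := by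
    have h1 : 0 < (Mset H).ncard :=
      (Set.ncard_pos (Set.toFinite _)).mpr (Mset_nonempty hH hm)
    exact_mod_cast h1
  refine le_of_forall_pos_le_add fun ε hε => ?_
  have hlt : sdimf G < sdimf G + ε / ((Mset H).ncard : ℝ) :=
    lt_add_of_pos_right _ (div_pos hε hMpos)
  obtain ⟨s, hsmem, hs⟩ := exists_lt_of_csInf_lt (sdimf_set_nonempty hG) hlt
  obtain ⟨f, hf, rfl⟩ := hsmem
  have h1 : sdimf (G.boxProd H) ≤ ((Mset H).ncard : ℝ) * ∑ᶠ a, f a := by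
    have := sdimf_le (isSRF_boxProd_of_left hG hH hn hm hf)
    rwa [sum_spread2] at this
  have h2 : ((Mset H).ncard : ℝ) * (∑ᶠ a, f a)
      ≤ ((Mset H).ncard : ℝ) * (sdimf G + ε / ((Mset H).ncard : ℝ)) :=
    mul_le_mul_of_nonneg_left (le_of_lt hs) (le_of_lt hMpos)
  have h3 : ((Mset H).ncard : ℝ) * (sdimf G + ε / ((Mset H).ncard : ℝ))
      = ((Mset H).ncard : ℝ) * sdimf G + ε := by
    rw [mul_add, mul_div_cancel₀ _ (ne_of_gt hMpos)]
  linarith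

end Main

end Aux

/-- Let `G` and `H` be connected graphs of order at least two. Then
`max{2·sdim_f(G), 2·sdim_f(H)} ≤ sdim_f(G □ H) ≤ min{|M(G)|·sdim_f(H), |M(H)|·sdim_f(G)}`. -/
theorem sdimf_boxProd_bounds {V W : Type*} [Fintype V] [Fintype W]
    (G : SimpleGraph V) (H : SimpleGraph W)
    (hG : G.Connected) (hH : H.Connected)
    (hn : 2 ≤ Fintype.card V) (hm : 2 ≤ Fintype.card W) :
    max (2 * sdimf G) (2 * sdimf H) ≤ sdimf (G.boxProd H) ∧
    sdimf (G.boxProd H) ≤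
      min (((Mset G).ncard : ℝ) * sdimf H) (((Mset H).ncard : ℝ) * sdimf G) := by
  have hn' : 1 < Fintype.card V := hn
  have hm' : 1 < Fintype.card W := hm
  constructor
  · apply max_le
    · refine le_csInf (sdimf_set_nonempty (hG.boxProd hH)) ?_
      rintro s ⟨g, hg, rfl⟩
      exact two_sdimf_left_le hG hH hm' hg
    · refine le_csInf (sdimf_set_nonempty (hG.boxProd hH)) ?_
      rintro s ⟨g, hg, rfl⟩
      exact two_sdimf_right_le hG hH hn' hg
  · exact le_min (sdimf_boxProd_le_right hG hH hn' hm')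
      (sdimf_boxProd_le_left hG hH hn' hm')
end
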